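/- If a stable 2-coloring f : [ω]² → 2 has an infinite p-homogeneous set H = H_L ⊕ H_R, then f ⊕ H computes an infinite homogeneous set for f; in particular, if some oracle X with f ≤_T X computes a p-homogeneous set for f, then X computes a homogeneous set for f. -/

import Mathlib

open Classical in
noncomputable def chr (A : Set ℕ) : ℕ →. ℕ :=
  fun n => Part.some (if n ∈ A then 1 else 0)

/-- The effective join (recursive union) of two sets: `A ⊕ B`. -/
def setJoin (A B : Set ℕ) : Set ℕ :=
  {n | (n % 2 = 0 ∧ n / 2 ∈ A) ∨ (n % 2 = 1 ∧ n / 2 ∈ B)}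

/-- Codes for partial recursive functions relative to an oracle. -/
inductive OCode : Type
  | zero | succ | left | right | oracle
  | pair (a b : OCode) | comp (a b : OCode)
  | prec (a b : OCode) | rfind' (a : OCode)

/-- Evaluation of an oracle code relative to oracle `O`. -/
def OCode.eval (O : ℕ →. ℕ) : OCode → ℕ →. ℕ
  | .zero => pure 0
  | .succ => Nat.succ
  | .left => fun n : ℕ => n.unpair.1
  | .right => fun n : ℕ => n.unpair.2
  | .oracle => O
  | .pair cf cg => fun n => Nat.pair <$> eval O cf n <*> eval O cg n
  | .comp cf cg => fun n => eval O cg n >>= eval O cf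
  | .prec cf cg =>
    Nat.unpaired fun a n =>
      n.rec (eval O cf a) fun y IH => do
        let i ← IH
        eval O cg (Nat.pair a (Nat.pair y i))
  | .rfind' cf =>
    Nat.unpaired fun a m =>
      (Nat.rfind fun n => (fun m => m = 0) <$> eval O cf (Nat.pair a (n + m))).map (· + m)

/-- `g` is partial recursive in the oracle `O`. -/
def RecIn (O g : ℕ →. ℕ) : Prop := ∃ c : OCode, OCode.eval O c = g

/-- Turing reducibility between sets of naturals. -/
def TuringLE (A B : Set ℕ) : Prop := RecIn (chr B) (chr A)

open Classical in
/-- The oracle coding the join of a coloring `f` with a set `A`. -/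
noncomputable def colorJoinOracle (f : ℕ → ℕ → Fin 2) (A : Set ℕ) : ℕ →. ℕ :=
  fun n => Part.some
    (if n % 2 = 0 then ((f (n / 2).unpair.1 (n / 2).unpair.2 : Fin 2) : ℕ)
     else if n / 2 ∈ A then 1 else 0)

namespace OCode

def embed : Nat.Partrec.Code → OCode
  | .zero => .zero
  | .succ => .succ
  | .left => .left
  | .right => .right
  | .pair a b => .pair (embed a) (embed b)
  | .comp a b => .comp (embed a) (embed b)
  | .prec a b => .prec (embed a) (embed b)
  | .rfind' a => .rfind' (embed a)

theorem eval_embed (O : ℕ →. ℕ) : ∀ c : Nat.Partrec.Code, OCode.eval O (embed c) = c.eval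
  | .zero => rfl
  | .succ => rfl
  | .left => rfl
  | .right => rfl
  | .pair a b => by simp [embed, eval, Nat.Partrec.Code.eval, eval_embed O a, eval_embed O b]; rfl
  | .comp a b => by simp [embed, eval, Nat.Partrec.Code.eval, eval_embed O a, eval_embed O b]; rfl
  | .prec a b => by simp [embed, eval, Nat.Partrec.Code.eval, eval_embed O a, eval_embed O b]; rfl
  | .rfind' a => by simp [embed, eval, Nat.Partrec.Code.eval, eval_embed O a]; rfl

def subst (o : OCode) : OCode → OCode
  | .zero => .zero
  | .succ => .succ
  | .left => .left
  | .right => .right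
  | .oracle => o
  | .pair a b => .pair (subst o a) (subst o b)
  | .comp a b => .comp (subst o a) (subst o b)
  | .prec a b => .prec (subst o a) (subst o b)
  | .rfind' a => .rfind' (subst o a)

theorem eval_subst {O O' : ℕ →. ℕ} {o : OCode} (ho : eval O o = O') :
    ∀ c : OCode, eval O (subst o c) = eval O' c
  | .zero => rfl
  | .succ => rfl
  | .left => rfl
  | .right => rfl
  | .oracle => ho
  | .pair a b => by simp [subst, eval, eval_subst ho a, eval_subst ho b]; rfl
  | .comp a b => by simp [subst, eval, eval_subst ho a, eval_subst ho b]; rfl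
  | .prec a b => by simp [subst, eval, eval_subst ho a, eval_subst ho b]; rfl
  | .rfind' a => by simp [subst, eval, eval_subst ho a]; rfl

end OCode

theorem RecIn.of_partrec {O g : ℕ →. ℕ} (h : Nat.Partrec g) : RecIn O g := by
  obtain ⟨c, hc⟩ := Nat.Partrec.Code.exists_code.1 h
  exact ⟨OCode.embed c, by rw [OCode.eval_embed]; exact hc⟩

theorem RecIn.trans {O O' g : ℕ →. ℕ} (hg : RecIn O' g) (hO' : RecIn O O') : RecIn O g := by
  obtain ⟨cg, hcg⟩ := hg; obtain ⟨co, hco⟩ := hO'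
  exact ⟨OCode.subst co cg, by rw [OCode.eval_subst hco]; exact hcg⟩

theorem pfun_bind_some (a : ℕ) (f : ℕ →. ℕ) : Part.some a >>= f = f a := Part.bind_some _ _

theorem computable_code (h : ℕ → ℕ) (hh : Computable h) :
    ∃ c : Nat.Partrec.Code, c.eval = fun n => Part.some (h n) := by
  obtain ⟨c, hc⟩ := Nat.Partrec.Code.exists_code.1 (Partrec.nat_iff.1 hh)
  exact ⟨c, by rw [hc]; rfl⟩

def combT (m : ℕ) : ℕ :=
  Encodable.encode (((Encodable.decode (α := List ℕ) m.unpair.1).getD []) ++ [m.unpair.2])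

theorem combT_computable : Computable combT := by
  have : Primrec combT :=
    Primrec.encode.comp <| Primrec.list_concat.comp
      (Primrec.option_getD.comp
        (Primrec.decode.comp (Primrec.fst.comp Primrec.unpair)) (Primrec.const []))
      (Primrec.snd.comp Primrec.unpair)
  exact this.to_comp

theorem RecIn.transcript {O : ℕ →. ℕ} {ov : ℕ → ℕ} (hO : O = fun n => Part.some (ov n)) :
    ∃ cT : OCode, ∀ k, OCode.eval O cT k
      = Part.some (Encodable.encode (List.map ov (List.range k))) := by
  obtain ⟨cComb, hcComb⟩ := computable_code combT combT_computable
  obtain ⟨cInit, hcInit⟩ := computable_code (fun _ => Encodable.encode ([] : List ℕ))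
    (Computable.const _)
  obtain ⟨cPair0, hcPair0⟩ := computable_code (fun n => Nat.pair 0 n)
    ((Primrec₂.natPair.comp (Primrec.const 0) Primrec.id).to_comp)
  set cg : OCode := OCode.comp (OCode.embed cComb)
      (OCode.pair (OCode.comp .right .right) (OCode.comp .oracle (OCode.comp .left .right)))
    with hcg
  refine ⟨OCode.comp (OCode.prec (OCode.embed cInit) cg) (OCode.embed cPair0), ?_⟩
  intro k
  have hbase : ∀ k, OCode.eval O (OCode.prec (OCode.embed cInit) cg) (Nat.pair 0 k)
      = Part.some (Encodable.encode (List.map ov (List.range k))) := by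
    intro k
    induction k with
    | zero =>
      simp [OCode.eval, OCode.eval_embed, hcInit]
    | succ k ih =>
      have : OCode.eval O (OCode.prec (OCode.embed cInit) cg) (Nat.pair 0 (k+1))
          = (OCode.eval O (OCode.prec (OCode.embed cInit) cg) (Nat.pair 0 k)) >>=
            fun i => OCode.eval O cg (Nat.pair 0 (Nat.pair k i)) := by
        simp [OCode.eval]
      rw [this, ih]
      have : OCode.eval O cg (Nat.pair 0 (Nat.pair k (Encodable.encode (List.map ov (List.range k)))))
          = Part.some (Encodable.encode (List.map ov (List.range (k+1)))) := by
        rw [hcg]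
        simp [OCode.eval, OCode.eval_embed, hcComb, hO, Seq.seq, pfun_bind_some, combT, Encodable.encodek,
          List.range_succ]
        exact (congrFun (OCode.eval_embed _ cComb) _).trans (by simp [hcComb, combT, Encodable.encodek])
      rw [show (do
          let i ← Part.some (Encodable.encode (List.map ov (List.range k)))
          OCode.eval O cg (Nat.pair 0 (Nat.pair k i))) = OCode.eval O cg (Nat.pair 0 (Nat.pair k (Encodable.encode (List.map ov (List.range k))))) from Part.bind_some _ _]
      exact this
  simpa [OCode.eval, OCode.eval_embed, hcPair0] using hbase k

def chkg (cv : ℕ) (g : ℕ → ℕ) (x : ℕ) (l : List Bool) : ℕ → Bool :=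
  Nat.rec true (fun y ih => ih && (!(l.getD y false) || decide (g (2 * Nat.pair y x) = cv)))

def goodg (cv : ℕ) (g : ℕ → ℕ) (x : ℕ) (l : List Bool) : Bool :=
  decide (g (4 * x + 1) = 1) && chkg cv g x l x

def Lg (cv : ℕ) (g : ℕ → ℕ) : ℕ → List Bool :=
  Nat.rec [] (fun n ih => ih ++ [goodg cv g n ih])

def pbg (cv : ℕ) (g : ℕ → ℕ) (x : ℕ) : Bool := (Lg cv g (x + 1)).getD x false

def lkup (t : ℕ) : ℕ → ℕ := fun i => ((Encodable.decode (α := List ℕ) t).getD []).getD i 0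

def Gfun (cv : ℕ) (p : ℕ) : ℕ := cond (pbg cv (lkup p.unpair.2) p.unpair.1) 1 0

section PR
open Primrec

private theorem band_pr : Primrec₂ (· && ·) := Primrec.dom_bool₂ _
private theorem bor_pr : Primrec₂ (· || ·) := Primrec.dom_bool₂ _
private theorem bnot_pr : Primrec Bool.not := Primrec.dom_bool _

theorem chk_primrec (cv : ℕ) :
    Primrec₂ fun (q : (List ℕ × ℕ) × List Bool) (k : ℕ) =>
      chkg cv (fun i => q.1.1.getD i 0) q.1.2 q.2 k := by
  have h1 : Primrec fun z : ((List ℕ × ℕ) × List Bool) × ℕ × Bool =>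
      (z.1.2.getD z.2.1 false : Bool) :=
    (Primrec.list_getD false).comp (snd.comp fst) (fst.comp snd)
  have h2 : Primrec fun z : ((List ℕ × ℕ) × List Bool) × ℕ × Bool =>
      z.1.1.1.getD (2 * Nat.pair z.2.1 z.1.1.2) 0 :=
    (Primrec.list_getD 0).comp (fst.comp (fst.comp fst))
      (Primrec.nat_mul.comp (const 2)
        (Primrec₂.natPair.comp (fst.comp snd) (snd.comp (fst.comp fst))))
  have h3 : Primrec fun z : ((List ℕ × ℕ) × List Bool) × ℕ × Bool =>
      decide (z.1.1.1.getD (2 * Nat.pair z.2.1 z.1.1.2) 0 = cv) :=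
    (Primrec.eq.comp h2 (const cv)).decide
  have hg : Primrec₂ fun (q : (List ℕ × ℕ) × List Bool) (p : ℕ × Bool) =>
      p.2 && (!(q.2.getD p.1 false) || decide (q.1.1.getD (2 * Nat.pair p.1 q.1.2) 0 = cv)) :=
    band_pr.comp (snd.comp snd) (bor_pr.comp (bnot_pr.comp h1) h3)
  exact (Primrec.nat_rec (Primrec.const true) hg).of_eq (fun q k => rfl)

theorem good_primrec (cv : ℕ) :
    Primrec fun q : (List ℕ × ℕ) × List Bool =>
      goodg cv (fun i => q.1.1.getD i 0) q.1.2 q.2 := by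
  have h1 : Primrec fun q : (List ℕ × ℕ) × List Bool =>
      decide (q.1.1.getD (4 * q.1.2 + 1) 0 = 1) :=
    (Primrec.eq.comp
      ((Primrec.list_getD 0).comp (fst.comp fst)
        (succ.comp (Primrec.nat_mul.comp (const 4) (snd.comp fst)))) (const 1)).decide
  exact (band_pr.comp h1 ((chk_primrec cv).comp Primrec.id (snd.comp fst))).of_eq
    (fun q => rfl)

theorem Lg_primrec (cv : ℕ) :
    Primrec₂ fun (t : List ℕ) (m : ℕ) => Lg cv (fun i => t.getD i 0) m := by
  have hg : Primrec₂ fun (t : List ℕ) (p : ℕ × List Bool) =>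
      p.2 ++ [goodg cv (fun i => t.getD i 0) p.1 p.2] :=
    Primrec.list_concat.comp (snd.comp snd)
      ((good_primrec cv).comp
        (((fst).pair (fst.comp snd)).pair (snd.comp snd)))
  exact (Primrec.nat_rec (Primrec.const ([] : List Bool)) hg).of_eq (fun t m => rfl)

theorem pbg_primrec (cv : ℕ) :
    Primrec₂ fun (t : List ℕ) (x : ℕ) => pbg cv (fun i => t.getD i 0) x := by
  exact ((Primrec.list_getD false).comp
    ((Lg_primrec cv).comp fst (succ.comp snd)) snd).to₂

theorem Gfun_computable (cv : ℕ) : Computable (Gfun cv) := by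
  have hl : Primrec fun p : ℕ => (Encodable.decode (α := List ℕ) p.unpair.2).getD [] :=
    Primrec.option_getD.comp (Primrec.decode.comp (snd.comp Primrec.unpair)) (const [])
  have hpb : Primrec fun p : ℕ => pbg cv (lkup p.unpair.2) p.unpair.1 := by
    have := (pbg_primrec cv).comp hl (fst.comp Primrec.unpair)
    exact this.of_eq (fun p => rfl)
  exact (Primrec.cond hpb (const 1) (const 0)).to_comp

end PR

theorem RecIn.totalUse {O : ℕ →. ℕ} {ov : ℕ → ℕ} (hO : O = fun n => Part.some (ov n))
    (Gf Bf : ℕ → ℕ) (hGf : Computable Gf) (hBf : Computable Bf) :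
    RecIn O (fun n => Part.some
      (Gf (Nat.pair n (Encodable.encode (List.map ov (List.range (Bf n))))))) := by
  obtain ⟨cT, hcT⟩ := RecIn.transcript hO
  obtain ⟨cG, hcG⟩ := computable_code Gf hGf
  obtain ⟨cB, hcB⟩ := computable_code Bf hBf
  obtain ⟨cid, hcid⟩ := computable_code id Computable.id
  refine ⟨OCode.comp (OCode.embed cG)
    (OCode.pair (OCode.embed cid) (OCode.comp cT (OCode.embed cB))), ?_⟩
  funext n
  simp [OCode.eval, OCode.eval_embed, hcG, hcB, hcid, hcT, Seq.seq, pfun_bind_some]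

section LgLemmas

variable (cv : ℕ) (g g1 g2 : ℕ → ℕ)

theorem Lg_succ (m : ℕ) : Lg cv g (m + 1) = Lg cv g m ++ [goodg cv g m (Lg cv g m)] := rfl

theorem Lg_length : ∀ m, (Lg cv g m).length = m := by
  intro m
  induction m with
  | zero => rfl
  | succ m ih => rw [Lg_succ]; simp [ih]

theorem pbg_eq (x : ℕ) : pbg cv g x = goodg cv g x (Lg cv g x) := by
  rw [pbg, Lg_succ, List.getD_append_right _ _ _ _ (by rw [Lg_length]),
    Lg_length]
  simp

theorem Lg_getD : ∀ m y, y < m → (Lg cv g m).getD y false = pbg cv g y := by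
  intro m
  induction m with
  | zero => omega
  | succ m ih =>
    intro y hy
    rcases Nat.lt_or_ge y m with h | h
    · rw [Lg_succ, List.getD_append _ _ _ _ (by rw [Lg_length]; exact h)]
      exact ih y h
    · have : y = m := by omega
      subst this
      rfl

theorem chkg_iff (x : ℕ) (l : List Bool) : ∀ k,
    (chkg cv g x l k = true ↔ ∀ y < k, l.getD y false = true → g (2 * Nat.pair y x) = cv) := by
  intro k
  induction k with
  | zero => simp [chkg]
  | succ k ih =>
    show (chkg cv g x l k && _) = true ↔ _
    rw [Bool.and_eq_true, ih]
    constructor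
    · rintro ⟨h1, h2⟩ y hy hl
      rcases Nat.lt_or_ge y k with h | h
      · exact h1 y h hl
      · have : y = k := by omega
        subst this
        simp only [hl, Bool.not_true, Bool.false_or, decide_eq_true_eq] at h2
        exact h2
    · intro h
      refine ⟨fun y hy hl => h y (by omega) hl, ?_⟩
      rcases hb : l.getD k false with _ | _
      · simp [hb]
      · simp [hb, h k (by omega) hb]

theorem pbg_iff (x : ℕ) : pbg cv g x = true ↔
    (g (4 * x + 1) = 1 ∧ ∀ y < x, pbg cv g y = true → g (2 * Nat.pair y x) = cv) := by
  rw [pbg_eq, goodg, Bool.and_eq_true, decide_eq_true_eq, chkg_iff]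
  constructor
  · rintro ⟨h1, h2⟩
    exact ⟨h1, fun y hy hp => h2 y hy (by rwa [Lg_getD cv g x y hy])⟩
  · rintro ⟨h1, h2⟩
    exact ⟨h1, fun y hy hp => h2 y hy (by rwa [Lg_getD cv g x y hy] at hp)⟩

theorem chkg_congr (x : ℕ) (l : List Bool)
    (h : ∀ y < x, g1 (2 * Nat.pair y x) = g2 (2 * Nat.pair y x)) :
    ∀ k, k ≤ x → chkg cv g1 x l k = chkg cv g2 x l k := by
  intro k
  induction k with
  | zero => intro; rfl
  | succ k ih =>
    intro hk
    show (chkg cv g1 x l k && _) = (chkg cv g2 x l k && _)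
    rw [ih (by omega), h k (by omega)]

theorem Lg_congr' : ∀ m, (∀ x < m, g1 (4 * x + 1) = g2 (4 * x + 1)) →
    (∀ x < m, ∀ y < x, g1 (2 * Nat.pair y x) = g2 (2 * Nat.pair y x)) →
    Lg cv g1 m = Lg cv g2 m := by
  intro m
  induction m with
  | zero => intro _ _; rfl
  | succ m ih =>
    intro ha hb
    rw [Lg_succ, Lg_succ, ih (fun x hx => ha x (by omega)) (fun x hx => hb x (by omega))]
    congr 2
    rw [goodg, goodg, ha m (by omega),
      chkg_congr cv g1 g2 m _ (hb m (by omega)) m le_rfl]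

theorem pbg_congr (x : ℕ) (ha : ∀ x' ≤ x, g1 (4 * x' + 1) = g2 (4 * x' + 1))
    (hb : ∀ x' ≤ x, ∀ y < x', g1 (2 * Nat.pair y x') = g2 (2 * Nat.pair y x')) :
    pbg cv g1 x = pbg cv g2 x := by
  rw [pbg, pbg, Lg_congr' cv g1 g2 (x + 1) (fun x' h => ha x' (by omega))
    (fun x' h => hb x' (by omega))]

end LgLemmas

section Main

variable (f : ℕ → ℕ → Fin 2) (HL HR : Set ℕ)

open Classical in
noncomputable def oval : ℕ → ℕ := fun n =>
  if n % 2 = 0 then ((f (n / 2).unpair.1 (n / 2).unpair.2 : Fin 2) : ℕ)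
  else if n / 2 ∈ setJoin HL HR then 1 else 0

theorem colorJoinOracle_eq :
    colorJoinOracle f (setJoin HL HR) = fun n => Part.some (oval f HL HR n) := rfl

open Classical in
theorem oval_mem (x : ℕ) : oval f HL HR (4 * x + 1) = if x ∈ HL then 1 else 0 := by
  have h1 : ¬ ((4 * x + 1) % 2 = 0) := by omega
  have h2 : (4 * x + 1) / 2 = 2 * x := by omega
  have h3 : 2 * x ∈ setJoin HL HR ↔ x ∈ HL := by
    simp [setJoin, Nat.mul_mod_right, Nat.mul_div_cancel_left x (by norm_num : 0 < 2)]
  rw [oval]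
  simp only [h1, if_false, h2]
  by_cases hx : x ∈ HL <;> simp [hx, h3]

theorem oval_f (y x : ℕ) : oval f HL HR (2 * Nat.pair y x) = (f y x : ℕ) := by
  rw [oval]
  simp [Nat.mul_mod_right, Nat.mul_div_cancel_left _ (by norm_num : 0 < 2), Nat.unpair_pair]

variable (c : Fin 2)

theorem pbP_iff (x : ℕ) : pbg (c : ℕ) (oval f HL HR) x = true ↔
    (x ∈ HL ∧ ∀ y < x, pbg (c : ℕ) (oval f HL HR) y = true → f y x = c) := by
  rw [pbg_iff, oval_mem]
  constructor
  · rintro ⟨h1, h2⟩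
    refine ⟨by by_cases hx : x ∈ HL <;> simp [hx] at h1 ⊢, fun y hy hp => ?_⟩
    have := h2 y hy hp
    rw [oval_f] at this
    exact Fin.val_injective this
  · rintro ⟨h1, h2⟩
    refine ⟨by simp [h1], fun y hy hp => ?_⟩
    rw [oval_f, h2 y hy hp]

end Main

section Main2

variable (f : ℕ → ℕ → Fin 2) (HL HR : Set ℕ) (c : Fin 2)

theorem limit_color (hR : HR.Infinite)
    (hstable : ∀ x : ℕ, ∃ j : Fin 2, ∃ N : ℕ, ∀ u, N ≤ u → f x u = j)
    (hphom : ∀ x ∈ HL, ∀ y ∈ HR, x ≠ y → f (min x y) (max x y) = c) :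
    ∀ y ∈ HL, ∃ N, ∀ u, N ≤ u → f y u = c := by
  intro y hy
  obtain ⟨j, N, hN⟩ := hstable y
  obtain ⟨z, hz, hz2⟩ := hR.exists_gt (max y N)
  have hyz : y < z := lt_of_le_of_lt (le_max_left _ _) hz2
  have h1 : f y z = c := by
    have := hphom y hy z hz (Nat.ne_of_lt hyz)
    rwa [min_eq_left hyz.le, max_eq_right hyz.le] at this
  have h2 : f y z = j := hN z (le_of_lt (lt_of_le_of_lt (le_max_right _ _) hz2))
  refine ⟨N, fun u hu => ?_⟩
  rw [hN u hu, ← h2, h1]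

theorem P_infinite (hL : HL.Infinite) (hR : HR.Infinite)
    (hstable : ∀ x : ℕ, ∃ j : Fin 2, ∃ N : ℕ, ∀ u, N ≤ u → f x u = j)
    (hphom : ∀ x ∈ HL, ∀ y ∈ HR, x ≠ y → f (min x y) (max x y) = c) :
    {x | pbg (c : ℕ) (oval f HL HR) x = true}.Infinite := by
  classical
  by_contra h
  rw [Set.not_infinite] at h
  set Nf : ℕ → ℕ := fun y =>
    if hy : y ∈ HL then Classical.choose (limit_color f HL HR c hR hstable hphom y hy) else 0
    with hNf
  have hNf' : ∀ y ∈ HL, ∀ u, Nf y ≤ u → f y u = c := by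
    intro y hy u hu
    rw [hNf] at hu
    simp only [hy, dif_pos] at hu
    exact Classical.choose_spec (limit_color f HL HR c hR hstable hphom y hy) u hu
  set F := h.toFinset with hF
  obtain ⟨x, hxHL, hx⟩ := hL.exists_gt (max (F.sup Nf) (F.sup id))
  have hPx : pbg (c : ℕ) (oval f HL HR) x = true := by
    rw [pbP_iff]
    refine ⟨hxHL, fun y hy hp => ?_⟩
    have hyF : y ∈ F := by rw [hF, Set.Finite.mem_toFinset]; exact hp
    have hyHL : y ∈ HL := ((pbP_iff f HL HR c y).1 hp).1
    refine hNf' y hyHL x ?_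
    calc Nf y ≤ F.sup Nf := Finset.le_sup hyF
      _ ≤ max (F.sup Nf) (F.sup id) := le_max_left _ _
      _ ≤ x := hx.le
  have hxF : x ∈ F := by rw [hF, Set.Finite.mem_toFinset]; exact hPx
  have : x ≤ F.sup id := Finset.le_sup (f := id) hxF
  have : x ≤ max (F.sup Nf) (F.sup id) := le_trans this (le_max_right _ _)
  omega

def Bnd (n : ℕ) : ℕ := 2 * (n * n + 2 * n) + 4 * n + 2

theorem Bnd_computable : Computable Bnd := by
  have : Primrec Bnd := by
    unfold Bnd
    exact Primrec.nat_add.comp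
      (Primrec.nat_add.comp
        (Primrec.nat_mul.comp (Primrec.const 2)
          (Primrec.nat_add.comp (Primrec.nat_mul.comp .id .id)
            (Primrec.nat_mul.comp (Primrec.const 2) .id)))
        (Primrec.nat_mul.comp (Primrec.const 4) .id))
      (Primrec.const 2)
  exact this.to_comp

theorem pair_le {y x n : ℕ} (hy : y ≤ n) (hx : x ≤ n) : Nat.pair y x ≤ n * n + 2 * n := by
  rw [Nat.pair]
  split <;> nlinarith [Nat.mul_le_mul hx hx, Nat.mul_le_mul hy hy]

theorem getD_map_range (g : ℕ → ℕ) {i M : ℕ} (h : i < M) :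
    (List.map g (List.range M)).getD i 0 = g i := by
  rw [List.getD_eq_getElem _ _ (by simpa using h)]
  simp

theorem chrH_eq :
    chr {x | pbg (c : ℕ) (oval f HL HR) x = true} =
    fun n => Part.some (Gfun (c : ℕ)
      (Nat.pair n (Encodable.encode (List.map (oval f HL HR) (List.range (Bnd n)))))) := by
  funext n
  rw [chr]
  congr 1
  rw [Gfun, Nat.unpair_pair]
  simp only
  have hlk : lkup (Encodable.encode (List.map (oval f HL HR) (List.range (Bnd n))))
      = fun i => (List.map (oval f HL HR) (List.range (Bnd n))).getD i 0 := by
    funext i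
    rw [lkup, Encodable.encodek]
    rfl
  rw [hlk]
  have hpb : pbg (c : ℕ) (fun i => (List.map (oval f HL HR) (List.range (Bnd n))).getD i 0) n
      = pbg (c : ℕ) (oval f HL HR) n := by
    apply pbg_congr
    · intro x' hx'
      exact getD_map_range _ (by unfold Bnd; nlinarith)
    · intro x' hx' y hy
      have : Nat.pair y x' ≤ n * n + 2 * n := pair_le (by omega) hx'
      exact getD_map_range _ (by unfold Bnd; omega)
  rw [hpb]
  by_cases hp : pbg (c : ℕ) (oval f HL HR) n = true
  · simp [hp, Set.mem_setOf_eq]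
  · simp only [Set.mem_setOf_eq, hp, if_false]
    rw [Bool.not_eq_true] at hp
    simp [hp]

end Main2

def selF (p : ℕ) : ℕ :=
  if p.unpair.1 % 2 = 0 then p.unpair.2.unpair.1
  else if (p.unpair.1 / 2) % 2 = 0 then p.unpair.2.unpair.2.unpair.1
  else p.unpair.2.unpair.2.unpair.2

theorem selF_computable : Computable selF := by
  have u1 : Primrec fun p : ℕ => p.unpair.1 := Primrec.fst.comp Primrec.unpair
  have u2 : Primrec fun p : ℕ => p.unpair.2 := Primrec.snd.comp Primrec.unpair
  have h1 : PrimrecPred fun p : ℕ => p.unpair.1 % 2 = 0 :=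
    Primrec.eq.comp (Primrec.nat_mod.comp u1 (Primrec.const 2)) (Primrec.const 0)
  have h2 : PrimrecPred fun p : ℕ => (p.unpair.1 / 2) % 2 = 0 :=
    Primrec.eq.comp (Primrec.nat_mod.comp
      (Primrec.nat_div.comp u1 (Primrec.const 2)) (Primrec.const 2)) (Primrec.const 0)
  have : Primrec selF := by
    unfold selF
    exact Primrec.ite h1 (u1.comp u2)
      (Primrec.ite h2 (u1.comp (u2.comp u2)) (u2.comp (u2.comp u2)))
  exact this.to_comp

theorem oracle_recIn (f : ℕ → ℕ → Fin 2) (HL HR : Set ℕ) (X : Set ℕ)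
    (hfX : RecIn (chr X) (fun n => Part.some ((f n.unpair.1 n.unpair.2 : Fin 2) : ℕ)))
    (hLX : TuringLE HL X) (hRX : TuringLE HR X) :
    RecIn (chr X) (colorJoinOracle f (setJoin HL HR)) := by
  obtain ⟨cf, hcf⟩ := hfX
  obtain ⟨cL, hcL⟩ := hLX
  obtain ⟨cR, hcR⟩ := hRX
  obtain ⟨cSel, hcSel⟩ := computable_code selF selF_computable
  obtain ⟨cid, hcid⟩ := computable_code id Computable.id
  obtain ⟨cHalf, hcHalf⟩ := computable_code (fun n => n / 2)
    ((Primrec.nat_div.comp .id (Primrec.const 2)).to_comp)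
  obtain ⟨cQuarter, hcQuarter⟩ := computable_code (fun n => n / 4)
    ((Primrec.nat_div.comp .id (Primrec.const 4)).to_comp)
  refine ⟨OCode.comp (OCode.embed cSel)
    (OCode.pair (OCode.embed cid)
      (OCode.pair (OCode.comp cf (OCode.embed cHalf))
        (OCode.pair (OCode.comp cL (OCode.embed cQuarter))
          (OCode.comp cR (OCode.embed cQuarter))))), ?_⟩
  funext n
  rw [colorJoinOracle_eq]
  simp only [OCode.eval, OCode.eval_embed, hcf, hcL, hcR, hcSel, hcid, hcHalf, hcQuarter, chr,
    Seq.seq, Part.bind_eq_bind, Part.bind_some, Part.map_eq_map, Part.map_some, id_eq, pfun_bind_some]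
  congr 1
  rw [selF, Nat.unpair_pair]
  simp only [Nat.unpair_pair]
  rw [oval]
  by_cases h2 : n % 2 = 0
  · simp [h2]
  · simp only [h2, if_false]
    have h2' : n % 2 = 1 := by omega
    have hdd : n / 2 / 2 = n / 4 := by omega
    by_cases h4 : (n / 2) % 2 = 0
    · have hmem : n / 2 ∈ setJoin HL HR ↔ n / 4 ∈ HL := by
        simp only [setJoin, Set.mem_setOf_eq, h4, hdd]
        constructor
        · rintro (⟨_, h⟩ | ⟨h, _⟩)
          · exact h
          · omega
        · exact fun h => Or.inl ⟨by trivial, h⟩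
      simp only [h4, if_true]
      classical
      exact if_congr hmem.symm rfl rfl
    · have h4' : (n / 2) % 2 = 1 := by omega
      have hmem : n / 2 ∈ setJoin HL HR ↔ n / 4 ∈ HR := by
        simp only [setJoin, Set.mem_setOf_eq, h4', hdd]
        constructor
        · rintro (⟨h, _⟩ | ⟨_, h⟩)
          · omega
          · exact h
        · exact fun h => Or.inr ⟨by trivial, h⟩
      simp only [h4, if_false]
      classical
      exact if_congr hmem.symm rfl rfl


/-- If a stable coloring `f` has an infinite p-homogeneous set `H_L ⊕ H_R`, then
`f ⊕ (H_L ⊕ H_R)` computes an infinite homogeneous set for `f`; in particular any oracle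
computing `f` and a p-homogeneous set computes a homogeneous set. -/
theorem phomogeneous_computes_homogeneous
    (f : ℕ → ℕ → Fin 2)
    (hstable : ∀ x : ℕ, ∃ j : Fin 2, ∃ N : ℕ, ∀ u, N ≤ u → f x u = j)
    (HL HR : Set ℕ) (hL : HL.Infinite) (hR : HR.Infinite) (c : Fin 2)
    (hphom : ∀ x ∈ HL, ∀ y ∈ HR, x ≠ y → f (min x y) (max x y) = c) :
    (∃ H : Set ℕ, H.Infinite ∧
      (∃ d : Fin 2, ∀ x ∈ H, ∀ y ∈ H, x < y → f x y = d) ∧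
      RecIn (colorJoinOracle f (setJoin HL HR)) (chr H)) ∧
    (∀ X : Set ℕ,
      RecIn (chr X) (fun n => Part.some ((f n.unpair.1 n.unpair.2 : Fin 2) : ℕ)) →
      TuringLE HL X → TuringLE HR X →
      ∃ H : Set ℕ, H.Infinite ∧
        (∃ d : Fin 2, ∀ x ∈ H, ∀ y ∈ H, x < y → f x y = d) ∧
        TuringLE H X) := by
  have hinf : {x | pbg (c : ℕ) (oval f HL HR) x = true}.Infinite :=
    P_infinite f HL HR c hL hR hstable hphom
  have hhom : ∃ d : Fin 2, ∀ x ∈ {x | pbg (c : ℕ) (oval f HL HR) x = true},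
      ∀ y ∈ {x | pbg (c : ℕ) (oval f HL HR) x = true}, x < y → f x y = d := by
    refine ⟨c, fun x hx y hy hxy => ?_⟩
    exact ((pbP_iff f HL HR c y).1 hy).2 x hxy hx
  have hrec : RecIn (colorJoinOracle f (setJoin HL HR))
      (chr {x | pbg (c : ℕ) (oval f HL HR) x = true}) := by
    rw [chrH_eq]
    exact RecIn.totalUse (colorJoinOracle_eq f HL HR) (Gfun (c : ℕ)) Bnd
      (Gfun_computable _) Bnd_computable
  refine ⟨⟨_, hinf, hhom, hrec⟩, ?_⟩
  intro X hfX hLX hRX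
  exact ⟨_, hinf, hhom, RecIn.trans hrec (oracle_recIn f HL HR X hfX hLX hRX)⟩
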